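/- Equality E(φ₀, φ₁) = 4π in the Bogomolny bound (with φ₀(0⁺)=0, φ₀(∞)=π) holds if and only if φ₁ = 0 and φ₀(r) = Q(r/λ) = 2·arctan(r/λ) for some λ > 0. -/

import Mathlib

open MeasureTheory Set Filter Real

lemma aux_meas (φ₀ φ₀' : ℝ → ℝ)
    (hderiv : ∀ r ∈ Ioi (0:ℝ), HasDerivAt φ₀ (φ₀' r) r) :
    AEStronglyMeasurable φ₀' (volume.restrict (Ioi (0:ℝ))) := by
  refine (measurable_deriv φ₀).aestronglyMeasurable.congr ?_
  exact (ae_restrict_iff' measurableSet_Ioi).2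
    (Eventually.of_forall fun r hr => ((hderiv r hr).deriv).symm ▸ (hderiv r hr).deriv)

lemma key_int (φ₀ φ₀' : ℝ → ℝ)
    (hderiv : ∀ r ∈ Ioi (0:ℝ), HasDerivAt φ₀ (φ₀' r) r)
    (h0 : Tendsto φ₀ (nhdsWithin 0 (Ioi 0)) (nhds 0))
    (hinf : Tendsto φ₀ atTop (nhds π))
    (hint2 : IntegrableOn (fun r => φ₀' r ^ 2 * r) (Ioi 0))
    (hint3 : IntegrableOn (fun r => Real.sin (φ₀ r) ^ 2 / r ^ 2 * r) (Ioi 0)) :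
    (IntegrableOn (fun r => 2 * φ₀' r * Real.sin (φ₀ r)) (Ioi 0)) ∧
    ∫ r in Ioi (0:ℝ), 2 * φ₀' r * Real.sin (φ₀ r) = 4 := by
  have hφcont : ContinuousOn φ₀ (Ioi (0:ℝ)) :=
    fun r hr => (hderiv r hr).continuousAt.continuousWithinAt
  have hmeas : AEStronglyMeasurable (fun r => 2 * φ₀' r * Real.sin (φ₀ r))
      (volume.restrict (Ioi (0:ℝ))) := by
    have h1 := aux_meas φ₀ φ₀' hderiv
    have h2 : AEStronglyMeasurable (fun r => Real.sin (φ₀ r)) (volume.restrict (Ioi (0:ℝ))) :=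
      (Real.continuous_sin.comp_continuousOn hφcont).aestronglyMeasurable measurableSet_Ioi
    exact (h1.const_mul 2).mul h2
  have hPint : IntegrableOn (fun r => 2 * φ₀' r * Real.sin (φ₀ r)) (Ioi 0) := by
    refine (hint2.add hint3).mono' hmeas ?_
    refine (ae_restrict_iff' measurableSet_Ioi).2 (Eventually.of_forall fun r hr => ?_)
    have hr0 : (0:ℝ) < r := hr
    set a := φ₀' r with ha; set s := Real.sin (φ₀ r) with hs
    have hsr : 0 < Real.sqrt r := Real.sqrt_pos.2 hr0
    have h6 := two_mul_le_add_sq (|a| * Real.sqrt r) (|s| / Real.sqrt r)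
    have e1 : 2 * (|a| * Real.sqrt r) * (|s| / Real.sqrt r) = 2 * |a| * |s| := by
      field_simp
    have e2 : (|a| * Real.sqrt r)^2 = a^2 * r := by
      rw [mul_pow, sq_abs, Real.sq_sqrt hr0.le]
    have e3 : (|s| / Real.sqrt r)^2 = s^2 / r := by
      rw [div_pow, sq_abs, Real.sq_sqrt hr0.le]
    rw [e1, e2, e3] at h6
    have h3 : s^2 / r^2 * r = s^2 / r := by field_simp
    have h5 : ‖2 * a * s‖ ≤ 2 * |a| * |s| := by
      rw [Real.norm_eq_abs, abs_mul, abs_mul, abs_two]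
    simp only [Pi.add_apply, ← ha, ← hs, h3]
    linarith
  refine ⟨hPint, ?_⟩
  set G : ℝ → ℝ := fun r => if r = 0 then (-2:ℝ) else -2 * Real.cos (φ₀ r) with hGdef
  have hGeq : ∀ r ∈ Ioi (0:ℝ), G r = -2 * Real.cos (φ₀ r) := fun r hr => if_neg (ne_of_gt hr)
  have hGderiv : ∀ r ∈ Ioi (0:ℝ), HasDerivAt G (2 * φ₀' r * Real.sin (φ₀ r)) r := by
    intro r hr
    have hc : HasDerivAt (fun s => Real.cos (φ₀ s)) (-Real.sin (φ₀ r) * φ₀' r) r :=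
      (hderiv r hr).cos
    have h2 := hc.const_mul (-2 : ℝ)
    have h3 : (fun s => -2 * Real.cos (φ₀ s)) =ᶠ[nhds r] G :=
      eventuallyEq_of_mem (Ioi_mem_nhds hr) (fun s hs => (hGeq s hs).symm)
    have h4 := h2.congr_of_eventuallyEq h3.symm
    refine h4.congr_deriv ?_; ring
  have hGcont : ContinuousWithinAt G (Ici (0:ℝ)) 0 := by
    rw [← continuousWithinAt_diff_self, (by ext y; simp [lt_iff_le_and_ne, ne_comm] : Ici (0:ℝ) \ {0} = Ioi 0)]
    have hG0 : G 0 = -2 := if_pos rfl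
    unfold ContinuousWithinAt
    rw [hG0]
    have h1 : Tendsto (fun r => -2 * Real.cos (φ₀ r)) (nhdsWithin 0 (Ioi 0)) (nhds (-2)) := by
      have := (Real.continuous_cos.tendsto 0).comp h0
      have h2 := this.const_mul (-2:ℝ)
      simpa using h2
    exact h1.congr' (eventually_mem_nhdsWithin.mono fun s hs => (hGeq s hs).symm)
  have hGtop : Tendsto G atTop (nhds 2) := by
    have h1 : Tendsto (fun r => -2 * Real.cos (φ₀ r)) atTop (nhds 2) := by
      have := (Real.continuous_cos.tendsto π).comp hinf
      have h2 := this.const_mul (-2:ℝ)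
      simpa using h2
    exact h1.congr' (Filter.eventually_of_mem (Ioi_mem_atTop (0:ℝ)) fun s hs => (hGeq s hs).symm)
  have := integral_Ioi_of_hasDerivAt_of_tendsto hGcont hGderiv hPint hGtop
  rw [this, hGdef]; norm_num

lemma cont_ae_zero (f : ℝ → ℝ) (hc : ContinuousOn f (Ioi (0:ℝ)))
    (h : ∀ᵐ r ∂(volume.restrict (Ioi (0:ℝ))), f r = 0) : ∀ r ∈ Ioi (0:ℝ), f r = 0 := by
  intro x hx
  by_contra hfx
  have hca : ContinuousAt f x := hc.continuousAt (Ioi_mem_nhds hx)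
  have hev : ∀ᶠ y in nhds x, f y ≠ 0 := hca.eventually_ne hfx
  obtain ⟨t, ht, hto, hxt⟩ := eventually_nhds_iff.1 hev
  have hsub : t ∩ Ioi 0 ⊆ {y | ¬ f y = 0} ∩ Ioi 0 :=
    fun y hy => ⟨ht y hy.1, hy.2⟩
  have h0 : volume ({y | ¬ f y = 0} ∩ Ioi 0) = 0 := by
    have := ae_iff.1 h
    rwa [Measure.restrict_apply' measurableSet_Ioi] at this
  have hpos : 0 < volume (t ∩ Ioi 0) :=
    (hto.inter isOpen_Ioi).measure_pos volume ⟨x, hxt, hx⟩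
  exact absurd (le_antisymm (le_trans (measure_mono hsub) h0.le) zero_le) (ne_of_gt hpos)

lemma ode_everywhere (φ₀ φ₀' : ℝ → ℝ)
    (hderiv : ∀ r ∈ Ioi (0:ℝ), HasDerivAt φ₀ (φ₀' r) r)
    (hae : ∀ᵐ r ∂(volume.restrict (Ioi (0:ℝ))), φ₀' r = Real.sin (φ₀ r) / r) :
    ∀ r ∈ Ioi (0:ℝ), HasDerivAt φ₀ (Real.sin (φ₀ r) / r) r := by
  set g : ℝ → ℝ := fun s => Real.sin (φ₀ s) / s with hgdef
  have hφcont : ContinuousOn φ₀ (Ioi (0:ℝ)) :=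
    fun r hr => (hderiv r hr).continuousAt.continuousWithinAt
  have hgcont : ContinuousOn g (Ioi (0:ℝ)) := by
    apply ContinuousOn.div (Real.continuous_sin.comp_continuousOn hφcont) continuousOn_id
    exact fun r hr => ne_of_gt hr
  -- FTC over compact subintervals
  have hFTC : ∀ a b : ℝ, 0 < a → a ≤ b → φ₀ b - φ₀ a = ∫ t in a..b, g t := by
    intro a b ha hab
    have hIcc : Icc a b ⊆ Ioi (0:ℝ) := fun y hy => lt_of_lt_of_le ha hy.1
    have hgint : IntervalIntegrable g volume a b := by
      apply ContinuousOn.intervalIntegrable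
      rw [uIcc_of_le hab]
      exact hgcont.mono hIcc
    have haeab : ∀ᵐ r ∂(volume.restrict (Ioc a b)), φ₀' r = g r := by
      refine ae_restrict_of_ae_restrict_of_subset (fun y hy => lt_trans ha hy.1) hae
    have hφint : IntervalIntegrable φ₀' volume a b := by
      rw [intervalIntegrable_iff_integrableOn_Ioc_of_le hab]
      exact (((intervalIntegrable_iff_integrableOn_Ioc_of_le hab).1 hgint)).congr
        (haeab.mono fun x hx => hx.symm)
    have h1 : ∫ t in a..b, φ₀' t = φ₀ b - φ₀ a := by
      apply intervalIntegral.integral_eq_sub_of_hasDerivAt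
      · intro x hx
        rw [uIcc_of_le hab] at hx
        exact hderiv x (hIcc hx)
      · exact hφint
    have h2 : ∫ t in a..b, φ₀' t = ∫ t in a..b, g t := by
      rw [intervalIntegral.integral_of_le hab, intervalIntegral.integral_of_le hab]
      exact integral_congr_ae haeab
    rw [← h2, h1]
  intro r hr
  have hr0 : (0:ℝ) < r := hr
  have hFder : HasDerivAt (fun u => φ₀ r + ∫ t in r..u, g t) (g r) r := by
    have hint : IntervalIntegrable g volume r r := by
      apply ContinuousOn.intervalIntegrable
      apply hgcont.mono
      intro y hy
      rw [uIcc_self] at hy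
      exact hy ▸ hr
    have hmeas : StronglyMeasurableAtFilter g (nhds r) :=
      hgcont.stronglyMeasurableAtFilter isOpen_Ioi _ hr
    exact (intervalIntegral.integral_hasDerivAt_right hint hmeas
      (hgcont.continuousAt (Ioi_mem_nhds hr))).const_add (φ₀ r)
  have heq : φ₀ =ᶠ[nhds r] (fun u => φ₀ r + ∫ t in r..u, g t) := by
    refine eventuallyEq_of_mem (Ioi_mem_nhds hr0) (fun u hu => ?_)
    have hu0 : (0:ℝ) < u := hu
    rcases le_total r u with h | h
    · rw [← hFTC r u hr0 h]; ring
    · rw [intervalIntegral.integral_symm, ← hFTC u r hu0 h]; ring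
  exact hFder.congr_of_eventuallyEq heq

lemma sin_ne_zero_on (φ₀ : ℝ → ℝ)
    (hd : ∀ r ∈ Ioi (0:ℝ), HasDerivAt φ₀ (Real.sin (φ₀ r) / r) r)
    (h0 : Tendsto φ₀ (nhdsWithin 0 (Ioi 0)) (nhds 0))
    (hinf : Tendsto φ₀ atTop (nhds π)) :
    ∀ r ∈ Ioi (0:ℝ), Real.sin (φ₀ r) ≠ 0 := by
  intro r₀ hr₀ hzero
  obtain ⟨n, hn⟩ := Real.sin_eq_zero_iff.1 hzero
  set c : ℝ := n * π with hc
  set w : ℝ → ℝ := fun r => (φ₀ r - c)^2 with hw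
  have hwd : ∀ r ∈ Ioi (0:ℝ),
      HasDerivAt w (2 * (φ₀ r - c) * (Real.sin (φ₀ r) / r)) r := by
    intro r hr
    have h1 := ((hd r hr).sub_const c).pow 2
    exact h1.congr_deriv (by norm_num)
  have habs : ∀ r ∈ Ioi (0:ℝ), |Real.sin (φ₀ r)| ≤ |φ₀ r - c| := by
    intro r hr
    have h1 := Real.sin_add_int_mul_pi (φ₀ r - c) n
    have h2 : φ₀ r - c + n * π = φ₀ r := by rw [hc]; ring
    rw [h2] at h1
    have habs1 : |((-1:ℝ))^n| = 1 := by
      rcases Int.even_or_odd n with he | ho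
      · rw [he.neg_one_zpow]; simp
      · rw [Odd.neg_one_zpow ho]; simp
    rw [h1, abs_mul, habs1, one_mul]
    exact Real.abs_sin_le_abs
  have hps : ∀ r ∈ Ioi (0:ℝ), |(φ₀ r - c) * Real.sin (φ₀ r)| ≤ (φ₀ r - c)^2 := by
    intro r hr
    rw [abs_mul]
    calc |φ₀ r - c| * |Real.sin (φ₀ r)| ≤ |φ₀ r - c| * |φ₀ r - c| :=
          mul_le_mul_of_nonneg_left (habs r hr) (abs_nonneg _)
      _ = (φ₀ r - c)^2 := by rw [← sq_abs]; ring
  have hwr₀ : w r₀ = 0 := by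
    simp only [hw]
    rw [← hn]
    simp [hc]
  -- w vanishes identically
  have hwzero : ∀ r ∈ Ioi (0:ℝ), w r = 0 := by
    intro r hr
    have hr0 : (0:ℝ) < r := hr
    have hr₀0 : (0:ℝ) < r₀ := hr₀
    rcases le_total r r₀ with hle | hge
    · -- use A = w * r^2 monotone on [r, r₀]
      set A : ℝ → ℝ := fun x => w x * x^2 with hA
      have hAd : ∀ x ∈ Ioi (0:ℝ), HasDerivAt A
          (2 * (φ₀ x - c) * (Real.sin (φ₀ x) / x) * x^2 + w x * (2 * x)) x := by
        intro x hx
        have := (hwd x hx).mul (hasDerivAt_pow 2 x)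
        exact this.congr_deriv (by norm_num)
      have hmono : MonotoneOn A (Icc r r₀) := by
        apply monotoneOn_of_deriv_nonneg (convex_Icc r r₀)
        · exact fun y hy => ((hAd y (lt_of_lt_of_le hr0 hy.1)).continuousAt).continuousWithinAt
        · rw [interior_Icc]
          exact fun y hy => ((hAd y (lt_trans hr0 hy.1)).differentiableAt).differentiableWithinAt
        · rw [interior_Icc]
          intro x hx
          have hx0 : (0:ℝ) < x := lt_trans hr0 hx.1
          rw [(hAd x hx0).deriv]
          have h7 := hps x hx0
          have h8 : Real.sin (φ₀ x) / x * x^2 = Real.sin (φ₀ x) * x := by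
            field_simp
          have h9 : (φ₀ x - c) * Real.sin (φ₀ x) ≥ -((φ₀ x - c)^2) := by
            linarith [neg_abs_le ((φ₀ x - c) * Real.sin (φ₀ x))]
          have h8' : 2 * (φ₀ x - c) * (Real.sin (φ₀ x) / x) * x^2
              = 2 * ((φ₀ x - c) * Real.sin (φ₀ x)) * x := by field_simp
          simp only [hw]
          rw [h8']
          have h15 : 0 ≤ ((φ₀ x - c) * Real.sin (φ₀ x) + (φ₀ x - c)^2) * x :=
            mul_nonneg (by linarith) hx0.le
          nlinarith [h15]
      have h10 : A r ≤ A r₀ := hmono ⟨le_refl r, hle⟩ ⟨hle, le_refl r₀⟩ hle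
      have h11 : A r₀ = 0 := by simp [hA, hwr₀]
      have h12 : 0 ≤ A r := mul_nonneg (sq_nonneg _) (sq_nonneg _)
      have h13 : A r = 0 := le_antisymm (h11 ▸ h10) h12
      have := mul_eq_zero.1 h13
      rcases this with h | h
      · exact h
      · exact absurd h (by positivity)
    · -- use B = w / r^2 antitone on [r₀, r]
      set B : ℝ → ℝ := fun x => w x / x^2 with hB
      have hBd : ∀ x ∈ Ioi (0:ℝ), HasDerivAt B
          ((2 * (φ₀ x - c) * (Real.sin (φ₀ x) / x) * x^2 - w x * (2 * x)) / (x^2)^2) x := by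
        intro x hx
        have hx0 : (0:ℝ) < x := hx
        have := (hwd x hx).div (hasDerivAt_pow 2 x) (by positivity)
        exact this.congr_deriv (by norm_num)
      have hanti : AntitoneOn B (Icc r₀ r) := by
        apply antitoneOn_of_deriv_nonpos (convex_Icc r₀ r)
        · exact fun y hy => ((hBd y (lt_of_lt_of_le hr₀0 hy.1)).continuousAt).continuousWithinAt
        · rw [interior_Icc]
          exact fun y hy => ((hBd y (lt_trans hr₀0 hy.1)).differentiableAt).differentiableWithinAt
        · rw [interior_Icc]
          intro x hx
          have hx0 : (0:ℝ) < x := lt_trans hr₀0 hx.1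
          rw [(hBd x hx0).deriv]
          apply div_nonpos_of_nonpos_of_nonneg _ (by positivity)
          have h7 := hps x hx0
          have h8 : Real.sin (φ₀ x) / x * x^2 = Real.sin (φ₀ x) * x := by
            field_simp
          have h9 : (φ₀ x - c) * Real.sin (φ₀ x) ≤ (φ₀ x - c)^2 := by
            linarith [le_abs_self ((φ₀ x - c) * Real.sin (φ₀ x))]
          have h8' : 2 * (φ₀ x - c) * (Real.sin (φ₀ x) / x) * x^2
              = 2 * ((φ₀ x - c) * Real.sin (φ₀ x)) * x := by field_simp
          simp only [hw]
          rw [h8']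
          have h15 : 0 ≤ ((φ₀ x - c)^2 - (φ₀ x - c) * Real.sin (φ₀ x)) * x :=
            mul_nonneg (by linarith) hx0.le
          nlinarith [h15]
      have h10 : B r ≤ B r₀ := hanti ⟨le_refl r₀, hge⟩ ⟨hge, le_refl r⟩ hge
      have h11 : B r₀ = 0 := by simp [hB, hwr₀]
      have h12 : 0 ≤ B r := div_nonneg (sq_nonneg _) (sq_nonneg _)
      have h13 : B r = 0 := le_antisymm (h11 ▸ h10) h12
      have h14 := div_eq_zero_iff.1 h13
      rcases h14 with h | h
      · exact h
      · exact absurd h (by positivity)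
  -- φ₀ is constant c, contradicting the limits
  have hconst : ∀ r ∈ Ioi (0:ℝ), φ₀ r = c := by
    intro r hr
    have := hwzero r hr
    have := pow_eq_zero_iff (n := 2) (by norm_num) |>.1 this
    linarith [this]
  have hc0 : c = 0 := by
    have h0' : Tendsto φ₀ (nhdsWithin 0 (Ioi 0)) (nhds c) := by
      apply Tendsto.congr' _ tendsto_const_nhds
      exact eventually_mem_nhdsWithin.mono fun s hs => (hconst s hs).symm
    exact (tendsto_nhds_unique h0' h0).symm ▸ rfl
  have hcpi : c = π := by
    have hinf' : Tendsto φ₀ atTop (nhds c) := by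
      apply Tendsto.congr' _ tendsto_const_nhds
      exact (Filter.eventually_of_mem (Ioi_mem_atTop (0:ℝ)) fun s hs => (hconst s hs).symm)
    exact tendsto_nhds_unique hinf' hinf
  exact Real.pi_ne_zero (by rw [← hcpi, hc0])

lemma ode_solution (φ₀ : ℝ → ℝ)
    (hd : ∀ r ∈ Ioi (0:ℝ), HasDerivAt φ₀ (Real.sin (φ₀ r) / r) r)
    (h0 : Tendsto φ₀ (nhdsWithin 0 (Ioi 0)) (nhds 0))
    (hinf : Tendsto φ₀ atTop (nhds π)) :
    ∃ lam > (0:ℝ), ∀ r ∈ Ioi (0:ℝ), φ₀ r = 2 * Real.arctan (r / lam) := by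
  have hφcont : ContinuousOn φ₀ (Ioi (0:ℝ)) :=
    fun r hr => (hd r hr).continuousAt.continuousWithinAt
  have hsin := sin_ne_zero_on φ₀ hd h0 hinf
  -- witnesses of small and large values
  have hex_lo : ∃ s, φ₀ s < 1 ∧ s ∈ Ioi (0:ℝ) := by
    have h1 : φ₀ ⁻¹' (Iio 1) ∈ nhdsWithin 0 (Ioi 0) := h0 (Iio_mem_nhds one_pos)
    exact ((eventually_iff.2 h1).and eventually_mem_nhdsWithin).exists
  have hex_hi : ∃ s, 2 < φ₀ s ∧ s ∈ Ioi (0:ℝ) := by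
    have h1 : φ₀ ⁻¹' (Ioi 2) ∈ atTop := hinf (Ioi_mem_nhds (by linarith [Real.pi_gt_three]))
    exact ((eventually_iff.2 h1).and (Filter.eventually_of_mem (Ioi_mem_atTop (0:ℝ)) fun s hs => hs)).exists
  have hrange : ∀ r ∈ Ioi (0:ℝ), φ₀ r ∈ Ioo 0 π := by
    intro r hr
    have hr0 : (0:ℝ) < r := hr
    constructor
    · by_contra h
      push_neg at h
      obtain ⟨s, hs1, hs2⟩ := hex_hi
      have hsub : uIcc r s ⊆ Ioi (0:ℝ) := by
        intro y hy
        have := hy.1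
        calc (0:ℝ) < min r s := lt_min hr0 hs2
          _ ≤ y := this
      have him := intermediate_value_uIcc (hφcont.mono hsub)
      have h0mem : (0:ℝ) ∈ uIcc (φ₀ r) (φ₀ s) := by
        rw [Set.mem_uIcc]
        left
        exact ⟨h, by linarith⟩
      obtain ⟨t, ht, hft⟩ := him h0mem
      exact hsin t (hsub ht) (by rw [hft]; exact Real.sin_zero)
    · by_contra h
      push_neg at h
      obtain ⟨s, hs1, hs2⟩ := hex_lo
      have hsub : uIcc r s ⊆ Ioi (0:ℝ) := by
        intro y hy
        have := hy.1
        calc (0:ℝ) < min r s := lt_min hr0 hs2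
          _ ≤ y := this
      have him := intermediate_value_uIcc (hφcont.mono hsub)
      have hpimem : π ∈ uIcc (φ₀ r) (φ₀ s) := by
        rw [Set.mem_uIcc]
        right
        exact ⟨by linarith [Real.pi_gt_three], h⟩
      obtain ⟨t, ht, hft⟩ := him hpimem
      exact hsin t (hsub ht) (by rw [hft]; exact Real.sin_pi)
  -- u = tan (φ₀ / 2)
  set u : ℝ → ℝ := fun r => Real.tan (φ₀ r / 2) with hu
  have hbnd : ∀ r ∈ Ioi (0:ℝ), 0 < φ₀ r / 2 ∧ φ₀ r / 2 < π / 2 := by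
    intro r hr
    obtain ⟨h1, h2⟩ := hrange r hr
    exact ⟨by linarith, by linarith⟩
  have hcos : ∀ r ∈ Ioi (0:ℝ), 0 < Real.cos (φ₀ r / 2) := by
    intro r hr
    obtain ⟨h1, h2⟩ := hbnd r hr
    exact Real.cos_pos_of_mem_Ioo ⟨by linarith [Real.pi_pos], h2⟩
  have hud : ∀ r ∈ Ioi (0:ℝ), HasDerivAt u (u r / r) r := by
    intro r hr
    have hr0 : (0:ℝ) < r := hr
    have h1 : HasDerivAt (fun s => φ₀ s / 2) (Real.sin (φ₀ r) / r / 2) r := (hd r hr).div_const 2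
    have h2 := (Real.hasDerivAt_tan (ne_of_gt (hcos r hr))).comp r h1
    refine h2.congr_deriv ?_
    symm
    have hsin2 : Real.sin (φ₀ r) = 2 * Real.sin (φ₀ r / 2) * Real.cos (φ₀ r / 2) := by
      rw [← Real.sin_two_mul]
      ring_nf
    simp only [hu]
    rw [Real.tan_eq_sin_div_cos, hsin2]
    have hcne : Real.cos (φ₀ r / 2) ≠ 0 := ne_of_gt (hcos r hr)
    field_simp
  set v : ℝ → ℝ := fun r => u r / r with hv
  have hvd : ∀ r ∈ Ioi (0:ℝ), HasDerivAt v 0 r := by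
    intro r hr
    have hr0 : (0:ℝ) < r := hr
    have := (hud r hr).div (hasDerivAt_id r) (ne_of_gt hr0)
    refine this.congr_deriv ?_
    symm
    field_simp
    simp
  have hconst2 : ∀ a b : ℝ, 0 < a → a ≤ b → v b = v a := by
    intro a b ha hab
    have hIcc : Icc a b ⊆ Ioi (0:ℝ) := fun y hy => lt_of_lt_of_le ha hy.1
    have hcontv : ContinuousOn v (Icc a b) :=
      fun y hy => ((hvd y (hIcc hy)).continuousAt).continuousWithinAt
    exact constant_of_has_deriv_right_zero hcontv
      (fun x hx => ((hvd x (hIcc ⟨hx.1, hx.2.le⟩)).hasDerivWithinAt)) b ⟨hab, le_refl b⟩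
  have hvconst : ∀ r ∈ Ioi (0:ℝ), v r = v 1 := by
    intro r hr
    have hr0 : (0:ℝ) < r := hr
    rcases le_total r 1 with h | h
    · exact (hconst2 r 1 hr0 h).symm
    · exact hconst2 1 r one_pos h
  have h1mem : (1:ℝ) ∈ Ioi (0:ℝ) := mem_Ioi.2 one_pos
  have hu1pos : 0 < u 1 := by
    obtain ⟨h1, h2⟩ := hbnd 1 h1mem
    exact Real.tan_pos_of_pos_of_lt_pi_div_two h1 h2
  refine ⟨1 / u 1, by positivity, ?_⟩
  intro r hr
  have hr0 : (0:ℝ) < r := hr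
  have h1 : v r = v 1 := hvconst r hr
  have h2 : u r = u 1 * r := by
    have hv1 : v 1 = u 1 := by simp [hv]
    have hvr : v r = u r / r := rfl
    rw [hvr, hv1] at h1
    field_simp at h1
    linarith [h1]
  have h3 : r / (1 / u 1) = u 1 * r := by
    field_simp
  rw [h3, ← h2]
  have h4 : Real.arctan (u r) = φ₀ r / 2 := by
    obtain ⟨hb1, hb2⟩ := hbnd r hr
    exact Real.arctan_tan (by linarith [Real.pi_pos]) hb2
  rw [h4]
  ring

/-- Equality in the Bogomolny bound: with `φ₀(0⁺) = 0`, `φ₀(∞) = π` and the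
energy pieces integrable, `E(φ₀,φ₁) = 4π` holds if and only if `φ₁ = 0` on
`(0,∞)` and `φ₀ r = 2 arctan (r/λ)` on `(0,∞)` for some `λ > 0`. -/
theorem stmt_5 (φ₀ φ₁ φ₀' : ℝ → ℝ)
    (hderiv : ∀ r ∈ Ioi (0 : ℝ), HasDerivAt φ₀ (φ₀' r) r)
    (h0 : Filter.Tendsto φ₀ (nhdsWithin 0 (Ioi 0)) (nhds 0))
    (hinf : Filter.Tendsto φ₀ Filter.atTop (nhds Real.pi))
    (hcont : ContinuousOn φ₁ (Ioi 0))
    (hint1 : IntegrableOn (fun r => φ₁ r ^ 2 * r) (Ioi 0))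
    (hint2 : IntegrableOn (fun r => φ₀' r ^ 2 * r) (Ioi 0))
    (hint3 : IntegrableOn (fun r => Real.sin (φ₀ r) ^ 2 / r ^ 2 * r) (Ioi 0)) :
    (Real.pi * ∫ r in Ioi (0 : ℝ),
        (φ₁ r ^ 2 + φ₀' r ^ 2 + Real.sin (φ₀ r) ^ 2 / r ^ 2) * r = 4 * Real.pi)
      ↔ ((∀ r ∈ Ioi (0 : ℝ), φ₁ r = 0) ∧
          ∃ lam > (0 : ℝ), ∀ r ∈ Ioi (0 : ℝ), φ₀ r = 2 * Real.arctan (r / lam)) := by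
  obtain ⟨hPint, hI4⟩ := key_int φ₀ φ₀' hderiv h0 hinf hint2 hint3
  set D : ℝ → ℝ := fun r => (φ₀' r - Real.sin (φ₀ r) / r)^2 * r with hD
  have hDeq : ∀ r ∈ Ioi (0:ℝ), D r
      = (φ₀' r^2*r + Real.sin (φ₀ r)^2/r^2*r) - 2*φ₀' r*Real.sin (φ₀ r) := by
    intro r hr
    have hr0 : (0:ℝ) < r := hr
    simp only [hD]
    field_simp
    ring
  have hDae : D =ᵐ[volume.restrict (Ioi (0:ℝ))]
      fun r => (φ₀' r^2*r + Real.sin (φ₀ r)^2/r^2*r) - 2*φ₀' r*Real.sin (φ₀ r) :=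
    (ae_restrict_iff' measurableSet_Ioi).2 (Eventually.of_forall hDeq)
  have hDint : IntegrableOn D (Ioi (0:ℝ)) := ((hint2.add hint3).sub hPint).congr hDae.symm
  have hadd23 : ∫ r in Ioi (0:ℝ), (φ₀' r^2*r + Real.sin (φ₀ r)^2/r^2*r)
      = (∫ r in Ioi (0:ℝ), φ₀' r^2*r) + (∫ r in Ioi (0:ℝ), Real.sin (φ₀ r)^2/r^2*r) :=
    integral_add hint2 hint3
  have hsub : ∫ r in Ioi (0:ℝ),
        ((φ₀' r^2*r + Real.sin (φ₀ r)^2/r^2*r) - 2*φ₀' r*Real.sin (φ₀ r))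
      = (∫ r in Ioi (0:ℝ), (φ₀' r^2*r + Real.sin (φ₀ r)^2/r^2*r))
        - ∫ r in Ioi (0:ℝ), 2*φ₀' r*Real.sin (φ₀ r) :=
    integral_sub (hint2.add hint3) hPint
  have hadd1 : ∫ r in Ioi (0:ℝ), (φ₁ r^2*r + (φ₀' r^2*r + Real.sin (φ₀ r)^2/r^2*r))
      = (∫ r in Ioi (0:ℝ), φ₁ r^2*r)
        + ∫ r in Ioi (0:ℝ), (φ₀' r^2*r + Real.sin (φ₀ r)^2/r^2*r) :=
    integral_add hint1 (hint2.add hint3)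
  have hDval : ∫ r in Ioi (0:ℝ), D r
      = (∫ r in Ioi (0:ℝ), (φ₀' r^2*r + Real.sin (φ₀ r)^2/r^2*r)) - 4 := by
    rw [integral_congr_ae hDae, hsub, hI4]
  have hsplit : ∫ r in Ioi (0:ℝ), (φ₁ r ^ 2 + φ₀' r ^ 2 + Real.sin (φ₀ r) ^ 2 / r ^ 2) * r
      = (∫ r in Ioi (0:ℝ), φ₁ r^2*r)
        + ∫ r in Ioi (0:ℝ), (φ₀' r^2*r + Real.sin (φ₀ r)^2/r^2*r) := by
    rw [← hadd1]
    apply integral_congr_ae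
    apply Eventually.of_forall
    intro r
    ring
  set I1 := ∫ r in Ioi (0:ℝ), φ₁ r^2*r with hI1
  set ID := ∫ r in Ioi (0:ℝ), D r with hID
  have hmain : ∫ r in Ioi (0:ℝ), (φ₁ r ^ 2 + φ₀' r ^ 2 + Real.sin (φ₀ r) ^ 2 / r ^ 2) * r
      = I1 + (ID + 4) := by
    rw [hsplit]
    linarith [hDval]
  have hI1nonneg : 0 ≤ I1 :=
    setIntegral_nonneg measurableSet_Ioi fun r hr => mul_nonneg (sq_nonneg _) (le_of_lt hr)
  have hIDnonneg : 0 ≤ ID :=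
    setIntegral_nonneg measurableSet_Ioi fun r hr => mul_nonneg (sq_nonneg _) (le_of_lt hr)
  constructor
  · intro hE
    rw [hmain] at hE
    have hM : I1 + (ID + 4) = 4 :=
      mul_left_cancel₀ Real.pi_ne_zero (by rw [hE]; ring)
    have hI10 : I1 = 0 := by linarith
    have hID0 : ID = 0 := by linarith
    constructor
    · -- φ₁ = 0
      have hnn : (0:ℝ → ℝ) ≤ᵐ[volume.restrict (Ioi (0:ℝ))] fun r => φ₁ r^2*r :=
        (ae_restrict_iff' measurableSet_Ioi).2
          (Eventually.of_forall fun r hr => mul_nonneg (sq_nonneg _) (le_of_lt hr))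
      have hae1 : (fun r => φ₁ r^2*r) =ᵐ[volume.restrict (Ioi (0:ℝ))] 0 :=
        (integral_eq_zero_iff_of_nonneg_ae hnn hint1).1 hI10
      have hae2 : ∀ᵐ r ∂(volume.restrict (Ioi (0:ℝ))), φ₁ r = 0 := by
        filter_upwards [hae1, ae_restrict_mem measurableSet_Ioi] with r h1 h2
        have hr0 : (0:ℝ) < r := h2
        have : φ₁ r^2 * r = 0 := h1
        have h3 : φ₁ r^2 = 0 := by
          rcases mul_eq_zero.1 this with h | h
          · exact h
          · exact absurd h (ne_of_gt hr0)
        exact pow_eq_zero_iff (by norm_num) |>.1 h3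
      exact cont_ae_zero φ₁ hcont hae2
    · -- ODE
      have hnn : (0:ℝ → ℝ) ≤ᵐ[volume.restrict (Ioi (0:ℝ))] D :=
        (ae_restrict_iff' measurableSet_Ioi).2
          (Eventually.of_forall fun r hr => mul_nonneg (sq_nonneg _) (le_of_lt hr))
      have haeD : D =ᵐ[volume.restrict (Ioi (0:ℝ))] 0 :=
        (integral_eq_zero_iff_of_nonneg_ae hnn hDint).1 hID0
      have haeode : ∀ᵐ r ∂(volume.restrict (Ioi (0:ℝ))), φ₀' r = Real.sin (φ₀ r) / r := by
        filter_upwards [haeD, ae_restrict_mem measurableSet_Ioi] with r h1 h2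
        have hr0 : (0:ℝ) < r := h2
        have : (φ₀' r - Real.sin (φ₀ r) / r)^2 * r = 0 := h1
        have h3 : (φ₀' r - Real.sin (φ₀ r) / r)^2 = 0 := by
          rcases mul_eq_zero.1 this with h | h
          · exact h
          · exact absurd h (ne_of_gt hr0)
        have h4 := pow_eq_zero_iff (n := 2) (by norm_num) |>.1 h3
        linarith
      exact ode_solution φ₀ (ode_everywhere φ₀ φ₀' hderiv haeode) h0 hinf
  · rintro ⟨hφ1, lam, hlam, hQ⟩
    have hode : ∀ r ∈ Ioi (0:ℝ), φ₀' r = Real.sin (φ₀ r) / r := by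
      intro r hr
      have hr0 : (0:ℝ) < r := hr
      have h1 : HasDerivAt (fun s : ℝ => s / lam) (1/lam) r := by
        simpa using (hasDerivAt_id r).div_const lam
      have h2 := (Real.hasDerivAt_arctan (r/lam)).comp r h1
      have hQd : HasDerivAt (fun s => 2 * Real.arctan (s / lam))
          (2 * (1 / (1 + (r/lam)^2) * (1/lam))) r := h2.const_mul 2
      have heq : (fun s => 2 * Real.arctan (s / lam)) =ᶠ[nhds r] φ₀ :=
        eventuallyEq_of_mem (Ioi_mem_nhds hr0) (fun s hs => (hQ s hs).symm)
      have hφd : HasDerivAt φ₀ (2 * (1 / (1 + (r/lam)^2) * (1/lam))) r :=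
        hQd.congr_of_eventuallyEq heq.symm
      have huniq : φ₀' r = 2 * (1 / (1 + (r/lam)^2) * (1/lam)) := (hderiv r hr).unique hφd
      have hsinval : Real.sin (φ₀ r) = 2*(r/lam)/(1+(r/lam)^2) := by
        rw [hQ r hr]
        set t := r / lam with ht
        rw [Real.sin_two_mul, Real.sin_arctan, Real.cos_arctan]
        rw [mul_assoc, div_mul_div_comm, mul_one, Real.mul_self_sqrt (by positivity)]
        ring
      rw [huniq, hsinval]
      have hden : (0:ℝ) < 1 + (r/lam)^2 := by positivity
      field_simp
    have hI10 : I1 = 0 := by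
      rw [hI1]
      have : (fun r => φ₁ r^2*r) =ᵐ[volume.restrict (Ioi (0:ℝ))] 0 :=
        (ae_restrict_iff' measurableSet_Ioi).2
          (Eventually.of_forall fun r hr => by simp [hφ1 r hr])
      rw [integral_congr_ae this]
      simp
    have hID0 : ID = 0 := by
      rw [hID]
      have : D =ᵐ[volume.restrict (Ioi (0:ℝ))] 0 :=
        (ae_restrict_iff' measurableSet_Ioi).2
          (Eventually.of_forall fun r hr => by
            simp only [hD]
            rw [hode r hr]
            simp)
      rw [integral_congr_ae this]
      simp
    rw [hmain, hI10, hID0]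
    ring
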